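/- Let H be a finite moment graph over a lattice X with structure algebra Z(H) over a field k, and let L ⊆ X be a saturated sublattice. Then the canonical inclusion Z(H) → Z(H^L) becomes an isomorphism after localization at S^L, i.e. Z(H) ⊗_S S^L → Z(H^L) ⊗_S S^L is an isomorphism. -/

import Mathlib

open scoped TensorProduct

/-- A moment graph over the lattice `X`: vertices, edges with two endpoints,
and a labelling of the edges by elements of `X` (representing classes in
`X/{±1}`), with no loops. -/
structure MomentGraph (X : Type) where
  V : Type
  E : Type
  src : E → V
  tgt : E → V
  label : E → X
  no_loop : ∀ e, src e ≠ tgt e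

variable {n : ℕ} {k : Type} [Field k]

/-- The embedding of the lattice `X = ℤⁿ` into the symmetric algebra
`S = Sym(X ⊗ k)` (realized as a polynomial ring), as degree one (degree two
for the grading of the paper) elements. -/
noncomputable def latEmb (k : Type) [Field k] (n : ℕ) (v : Fin n → ℤ) :
    MvPolynomial (Fin n) k :=
  ∑ i, MvPolynomial.C (v i : k) * MvPolynomial.X i

/-- The structure algebra `Z(H)` of a moment graph, as an `S`-submodule of
`∏_{x ∈ V} S`: tuples `(z_x)` with `z_x ≡ z_y mod α(E)` for every edge
`E : x — y`. -/
noncomputable def structAlg (G : MomentGraph (Fin n → ℤ)) (k : Type) [Field k] :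
    Submodule (MvPolynomial (Fin n) k) (G.V → MvPolynomial (Fin n) k) where
  carrier := {z | ∀ e, z (G.src e) - z (G.tgt e) ∈ Ideal.span {latEmb k n (G.label e)}}
  add_mem' := by
    intro a b ha hb e
    have := Ideal.add_mem _ (ha e) (hb e)
    simpa [add_sub_add_comm] using this
  zero_mem' := by
    intro e
    simp
  smul_mem' := by
    intro c z hz e
    simpa [smul_sub, mul_sub] using (Ideal.span {latEmb k n (G.label e)}).smul_mem c (hz e)

/-- The subgraph `H^L`: all vertices, but only the edges whose labels lie in
the sublattice `L`. -/
@[reducible] def MomentGraph.restrict (G : MomentGraph (Fin n → ℤ)) (L : Submodule ℤ (Fin n → ℤ)) :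
    MomentGraph (Fin n → ℤ) where
  V := G.V
  E := {e : G.E // G.label e ∈ L}
  src e := G.src e.1
  tgt e := G.tgt e.1
  label e := G.label e.1
  no_loop e := G.no_loop e.1

lemma structAlg_le_restrict (G : MomentGraph (Fin n → ℤ))
    (L : Submodule ℤ (Fin n → ℤ)) (k : Type) [Field k] :
    structAlg G k ≤ structAlg (G.restrict L) k :=
  fun _ hz e => hz e.1

set_option maxHeartbeats 1000000 in
set_option synthInstance.maxHeartbeats 400000 in
/-- For a finite moment graph `H` over `X` and a saturated
sublattice `L ⊆ X`, the canonical inclusion `Z(H) → Z(H^L)` becomes an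
isomorphism after tensoring with the localization
`S^L = S[α⁻¹ : α ∈ X, α ≠ 0, α ∉ L]`. -/
theorem structAlg_localization_bijective
    (G : MomentGraph (Fin n → ℤ)) (k : Type) [Field k]
    [Finite G.V] [Finite G.E]
    (hnz : ∀ e, G.label e ≠ 0)
    (L : Submodule ℤ (Fin n → ℤ))
    (hsat : ∀ (x : Fin n → ℤ) (m : ℤ), m ≠ 0 → m • x ∈ L → x ∈ L) :
    Function.Bijective
      (LinearMap.rTensor
        (Localization (Submonoid.closure
          {s : MvPolynomial (Fin n) k | ∃ α : Fin n → ℤ, α ≠ 0 ∧ α ∉ L ∧ s = latEmb k n α}))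
        (Submodule.inclusion (structAlg_le_restrict G L k))) := by
  classical
  set S := MvPolynomial (Fin n) k
  set gens : Set S := {s | ∃ α : Fin n → ℤ, α ≠ 0 ∧ α ∉ L ∧ s = latEmb k n α} with hgens
  set M := Submonoid.closure gens with hM
  constructor
  · exact Module.Flat.rTensor_preserves_injective_linearMap _
      (Submodule.inclusion_injective _)
  · have : Fintype G.E := Fintype.ofFinite _
    set f : S := ∏ e ∈ Finset.univ.filter (fun e : G.E => G.label e ∉ L),
      latEmb k n (G.label e) with hfdef
    have hf : f ∈ M := Submonoid.prod_mem _ (fun e he =>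
      Submonoid.subset_closure ⟨G.label e, hnz e, (Finset.mem_filter.mp he).2, rfl⟩)
    have hdvd : ∀ e : G.E, G.label e ∉ L → latEmb k n (G.label e) ∣ f := fun e he =>
      Finset.dvd_prod_of_mem _ (Finset.mem_filter.mpr ⟨Finset.mem_univ e, he⟩)
    have hmem : ∀ z : structAlg (G.restrict L) k,
        f • z.1 ∈ structAlg G k := by
      intro z e
      by_cases h : G.label e ∈ L
      · have hz := z.2 ⟨e, h⟩
        simp only [Pi.smul_apply, smul_eq_mul, ← mul_sub]
        exact Ideal.mul_mem_left _ _ hz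
      · simp only [Pi.smul_apply, smul_eq_mul, ← mul_sub, Ideal.mem_span_singleton]
        exact (hdvd e h).mul_right _
    intro y
    induction y using TensorProduct.induction_on with
    | zero => exact ⟨0, map_zero _⟩
    | add a b ha hb =>
      obtain ⟨a', ha⟩ := ha; obtain ⟨b', hb⟩ := hb
      exact ⟨a' + b', by rw [map_add, ha, hb]⟩
    | tmul z t =>
      refine ⟨(⟨f • z.1, hmem z⟩ : structAlg G k) ⊗ₜ
        (IsLocalization.mk' (Localization M) (1 : S) ⟨f, hf⟩ * t), ?_⟩
      rw [LinearMap.rTensor_tmul]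
      have h1 : (Submodule.inclusion (structAlg_le_restrict G L k))
          ⟨f • z.1, hmem z⟩ = f • z := rfl
      rw [h1, TensorProduct.smul_tmul]
      congr 1
      rw [Algebra.smul_def, ← mul_assoc, mul_comm (algebraMap S (Localization M) f),
        IsLocalization.mk'_spec]
      simp
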